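/- Let H ∈ ℝ^{d×d} be symmetric positive definite, ε ∈ (0, 1/80), and b, v ∈ ℝ^d with ‖v‖_{H⁻¹} ≤ ε‖b‖_{H⁻¹}. Let y = H⁻¹(b + v). Then there exists a symmetric matrix Δ such that y = (H + Δ)⁻¹ b and (1 + 20ε)⁻¹ H ⪯ H + Δ ⪯ (1 + 20ε) H. -/

import Mathlib

set_option maxHeartbeats 1000000


open Matrix

/-- The local norm `‖v‖_M = √(vᵀ M v)`. -/
noncomputable def mnorm {d : ℕ} (M : Matrix (Fin d) (Fin d) ℝ) (v : Fin d → ℝ) : ℝ :=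
  Real.sqrt (v ⬝ᵥ M.mulVec v)

/-- Loewner order `A ⪯ B`. -/
def PSDle {d : ℕ} (A B : Matrix (Fin d) (Fin d) ℝ) : Prop := (B - A).PosSemidef

namespace PLSAux

lemma transpose_eq {d : ℕ} {A : Matrix (Fin d) (Fin d) ℝ} (h : A.IsHermitian) : Aᵀ = A := by
  have := h.eq
  rw [conjTranspose] at this
  simpa [Matrix.map, Matrix.transpose] using this

lemma posSemidef_of {d : ℕ} (A : Matrix (Fin d) (Fin d) ℝ) (h1 : Aᵀ = A)
    (h2 : ∀ x, 0 ≤ x ⬝ᵥ A *ᵥ x) : A.PosSemidef := by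
  refine PosSemidef.of_dotProduct_mulVec_nonneg ?_ fun x => by simpa using h2 x
  rw [Matrix.IsHermitian, conjTranspose]
  simpa [Matrix.map, Matrix.transpose] using h1

lemma vecMulVec_mulVec' {d : ℕ} (a c x : Fin d → ℝ) :
    (vecMulVec a c) *ᵥ x = (c ⬝ᵥ x) • a := by
  ext i
  simp only [Matrix.mulVec, dotProduct, vecMulVec_apply, Pi.smul_apply, smul_eq_mul,
    Finset.sum_mul]
  exact Finset.sum_congr rfl fun j _ => by ring

lemma vecMulVec_transpose {d : ℕ} (a c : Fin d → ℝ) :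
    (vecMulVec a c)ᵀ = vecMulVec c a := by
  ext i j
  simp [vecMulVec_apply, mul_comm]

lemma symm_dot {d : ℕ} {A : Matrix (Fin d) (Fin d) ℝ} (hA : Aᵀ = A) (x z : Fin d → ℝ) :
    x ⬝ᵥ A *ᵥ z = z ⬝ᵥ A *ᵥ x := by
  simp only [Matrix.mulVec, dotProduct, Finset.mul_sum]
  rw [Finset.sum_comm]
  refine Finset.sum_congr rfl fun i _ => Finset.sum_congr rfl fun j _ => ?_
  have h : A j i = A i j := by
    have := congrFun (congrFun hA i) j
    simpa using this
  rw [h]; ring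

/-- Cauchy–Schwarz for a PSD quadratic form. -/
lemma cs {d : ℕ} {A : Matrix (Fin d) (Fin d) ℝ} (hA : A.PosSemidef) (x z : Fin d → ℝ) :
    (x ⬝ᵥ A *ᵥ z) ^ 2 ≤ (x ⬝ᵥ A *ᵥ x) * (z ⬝ᵥ A *ᵥ z) := by
  have hAt : Aᵀ = A := transpose_eq hA.1
  have key : ∀ t : ℝ, 0 ≤ (z ⬝ᵥ A *ᵥ z) * (t * t) + (2 * (x ⬝ᵥ A *ᵥ z)) * t
      + (x ⬝ᵥ A *ᵥ x) := by
    intro t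
    have h0 : 0 ≤ (x + t • z) ⬝ᵥ A *ᵥ (x + t • z) := by simpa using hA.dotProduct_mulVec_nonneg (x + t • z)
    have e : (x + t • z) ⬝ᵥ A *ᵥ (x + t • z)
        = (z ⬝ᵥ A *ᵥ z) * (t * t) + (2 * (x ⬝ᵥ A *ᵥ z)) * t + (x ⬝ᵥ A *ᵥ x) := by
      simp only [mulVec_add, mulVec_smul, dotProduct_add, add_dotProduct, dotProduct_smul,
        smul_dotProduct, smul_eq_mul, symm_dot hAt z x]
      ring
    linarith [e ▸ h0]
  have hd := discrim_le_zero key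
  rw [discrim] at hd
  nlinarith [hd]

lemma abs_le_of_sq {a c : ℝ} (hc : 0 ≤ c) (h : a ^ 2 ≤ c ^ 2) : -c ≤ a ∧ a ≤ c :=
  ⟨by nlinarith, by nlinarith⟩


lemma scalar_main (c q X S A P D : ℝ) {N : ℝ} (hc0 : 0 < c) (hq : 0 < q) (hX0 : 0 ≤ X)
    (hNq : N ≤ c ^ 2 * q) (hS2 : S ^ 2 ≤ N * X) (hA2 : A ^ 2 ≤ q * X) (hP2 : P ^ 2 ≤ N * q)
    (hexp : q * q * D = -(q * (2 * (S * A))) + P * (A * A)) :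
    -(3 * c) * X ≤ D ∧ D ≤ 3 * c * X := by
  have hq2pos : (0 : ℝ) < q * q := by positivity
  have hP : -(c * q) ≤ P ∧ P ≤ c * q := by
    apply abs_le_of_sq (mul_nonneg hc0.le hq.le)
    calc P ^ 2 ≤ N * q := hP2
      _ ≤ c ^ 2 * q * q := mul_le_mul_of_nonneg_right hNq hq.le
      _ = (c * q) ^ 2 := by ring
  have hSA : -(c * q * X) ≤ S * A ∧ S * A ≤ c * q * X := by
    apply abs_le_of_sq (mul_nonneg (mul_nonneg hc0.le hq.le) hX0)
    have h1 : S ^ 2 ≤ c ^ 2 * q * X := le_trans hS2 (mul_le_mul_of_nonneg_right hNq hX0)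
    calc (S * A) ^ 2 = S ^ 2 * A ^ 2 := by ring
      _ ≤ (c ^ 2 * q * X) * (q * X) := by
          apply mul_le_mul h1 hA2 (sq_nonneg _) (by positivity)
      _ = (c * q * X) ^ 2 := by ring
  have e1 : -(q * (2 * (S * A))) ≤ 2 * c * (q * q) * X := by
    have := mul_le_mul_of_nonneg_left hSA.1 (by linarith : (0:ℝ) ≤ 2 * q)
    nlinarith
  have e1' : -(2 * c * (q * q) * X) ≤ -(q * (2 * (S * A))) := by
    have := mul_le_mul_of_nonneg_left hSA.2 (by linarith : (0:ℝ) ≤ 2 * q)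
    nlinarith
  have hAA : A * A ≤ q * X := by nlinarith [hA2]
  have e2 : P * (A * A) ≤ c * (q * q) * X := by
    have h1 : P * (A * A) ≤ (c * q) * (A * A) :=
      mul_le_mul_of_nonneg_right hP.2 (mul_self_nonneg A)
    have h2 : (c * q) * (A * A) ≤ (c * q) * (q * X) :=
      mul_le_mul_of_nonneg_left hAA (mul_nonneg hc0.le hq.le)
    nlinarith
  have e2' : -(c * (q * q) * X) ≤ P * (A * A) := by
    have h1 : -((c * q) * (A * A)) ≤ P * (A * A) := by
      have := mul_le_mul_of_nonneg_right hP.1 (mul_self_nonneg A)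
      nlinarith
    have h2 : (c * q) * (A * A) ≤ (c * q) * (q * X) :=
      mul_le_mul_of_nonneg_left hAA (mul_nonneg hc0.le hq.le)
    nlinarith
  constructor
  · rw [← mul_le_mul_iff_right₀ hq2pos, hexp]
    nlinarith [e1', e2']
  · rw [← mul_le_mul_iff_right₀ hq2pos, hexp]
    nlinarith [e1, e2]

end PLSAux

open PLSAux in
/-- Perturbed linear system: for symmetric positive definite `H`, `ε ∈ (0,1/80)` and
`‖v‖_{H⁻¹} ≤ ε‖b‖_{H⁻¹}`, the vector `y = H⁻¹(b+v)` equals `(H+Δ)⁻¹b` for some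
symmetric `Δ` with `(1+20ε)⁻¹ H ⪯ H + Δ ⪯ (1+20ε) H`. -/
theorem perturbed_linear_system {d : ℕ} (H : Matrix (Fin d) (Fin d) ℝ)
    (hH : H.PosDef) (ε : ℝ) (hε : 0 < ε) (hε' : ε < 1 / 80)
    (b v : Fin d → ℝ) (hv : mnorm H⁻¹ v ≤ ε * mnorm H⁻¹ b)
    (y : Fin d → ℝ) (hy : y = H⁻¹.mulVec (b + v)) :
    ∃ Δ : Matrix (Fin d) (Fin d) ℝ, Δ.IsSymm ∧ y = (H + Δ)⁻¹.mulVec b ∧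
      PSDle ((1 + 20 * ε)⁻¹ • H) (H + Δ) ∧ PSDle (H + Δ) ((1 + 20 * ε) • H) := by
  have hHs : H.PosSemidef := hH.posSemidef
  have hHt : Hᵀ = H := transpose_eq hH.1
  have hdet : IsUnit H.det := hH.det_pos.ne'.isUnit
  have hHinv : (H⁻¹).PosDef := hH.inv
  have hHinvs : (H⁻¹).PosSemidef := hHinv.posSemidef
  have hHinvt : (H⁻¹)ᵀ = H⁻¹ := transpose_eq hHinv.1
  have hHy : H *ᵥ y = b + v := by
    rw [hy, mulVec_mulVec, Matrix.mul_nonsing_inv _ hdet, one_mulVec]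
  have hεs : (0:ℝ) < 1 + 20 * ε := by linarith
  have hκ1 : (1 + 20 * ε)⁻¹ ≤ 1 - 16 * ε := by
    rw [show ((1 + 20 * ε)⁻¹ : ℝ) = 1 / (1 + 20 * ε) by rw [one_div], div_le_iff₀ hεs]
    nlinarith
  have hκ0 : 0 < (1 + 20 * ε)⁻¹ := by positivity
  by_cases hy0 : y = 0
  · -- degenerate case : y = 0, hence b = v = 0
    have hbv : b + v = 0 := by rw [← hHy, hy0, mulVec_zero]
    have hb : b = -v := by
      funext i; have := congrFun hbv i; simp at this ⊢; linarith
    have hnb : mnorm H⁻¹ b = mnorm H⁻¹ v := by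
      rw [hb]; unfold mnorm
      simp [neg_dotProduct, dotProduct_neg, mulVec_neg]
    have hv0 : v = 0 := by
      by_contra hne
      have h1 : 0 < v ⬝ᵥ H⁻¹ *ᵥ v := by simpa using hHinv.dotProduct_mulVec_pos hne
      have h2 : 0 < mnorm H⁻¹ v := Real.sqrt_pos.mpr h1
      rw [hnb] at hv
      nlinarith
    have hb0 : b = 0 := by rw [hb, hv0]; simp
    have psd1 : ((H + 0) - (1 + 20 * ε)⁻¹ • H).PosSemidef := by
      apply posSemidef_of
      · simp [transpose_sub, transpose_smul, hHt]
      · intro x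
        have h0 : 0 ≤ x ⬝ᵥ H *ᵥ x := by simpa using hHs.dotProduct_mulVec_nonneg x
        simp only [add_zero, sub_mulVec, smul_mulVec, dotProduct_sub, dotProduct_smul,
          smul_eq_mul]
        nlinarith
    have psd2 : ((1 + 20 * ε) • H - (H + 0)).PosSemidef := by
      apply posSemidef_of
      · simp [transpose_sub, transpose_smul, hHt]
      · intro x
        have h0 : 0 ≤ x ⬝ᵥ H *ᵥ x := by simpa using hHs.dotProduct_mulVec_nonneg x
        simp only [add_zero, sub_mulVec, smul_mulVec, dotProduct_sub, dotProduct_smul,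
          smul_eq_mul]
        nlinarith
    exact ⟨0, Matrix.isSymm_zero, by rw [hy0, hb0, mulVec_zero], psd1, psd2⟩
  · -- main case
    have hq : 0 < y ⬝ᵥ H *ᵥ y := by simpa using hH.dotProduct_mulVec_pos hy0
    set w : Fin d → ℝ := H *ᵥ y with hw
    set q : ℝ := y ⬝ᵥ w with hqdef
    have hqne : q ≠ 0 := hq.ne'
    have hwy : w ⬝ᵥ y = q := by rw [hqdef, dotProduct_comm]
    have hinvw : H⁻¹ *ᵥ w = y := by
      rw [hw, mulVec_mulVec, Matrix.nonsing_inv_mul _ hdet, one_mulVec]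
    -- the perturbation
    set Δ : Matrix (Fin d) (Fin d) ℝ :=
      (-(q⁻¹)) • (vecMulVec v w + vecMulVec w v)
        + ((v ⬝ᵥ y) * (q⁻¹ * q⁻¹)) • vecMulVec w w with hΔ
    have hΔt : Δᵀ = Δ := by
      rw [hΔ]
      simp only [transpose_add, transpose_smul, vecMulVec_transpose]
      rw [add_comm (vecMulVec w v)]
    have hΔy : Δ *ᵥ y = -v := by
      rw [hΔ]
      simp only [add_mulVec, smul_mulVec, mulVec_add, vecMulVec_mulVec', hwy]
      funext i
      simp only [Pi.add_apply, Pi.smul_apply, Pi.neg_apply, smul_eq_mul]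
      field_simp
      ring
    have hHΔy : (H + Δ) *ᵥ y = b := by
      rw [add_mulVec, hΔy]
      have h2 : H *ᵥ y = b + v := hHy
      rw [h2]
      funext i; simp
    -- quadratic form of Δ
    have hquad : ∀ x : Fin d → ℝ, x ⬝ᵥ Δ *ᵥ x
        = -(q⁻¹) * (2 * ((v ⬝ᵥ x) * (w ⬝ᵥ x)))
          + (v ⬝ᵥ y) * (q⁻¹ * q⁻¹) * ((w ⬝ᵥ x) * (w ⬝ᵥ x)) := by
      intro x
      rw [hΔ]
      simp only [add_mulVec, smul_mulVec, mulVec_add, vecMulVec_mulVec',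
        dotProduct_add, dotProduct_smul, smul_eq_mul]
      rw [dotProduct_comm x v, dotProduct_comm x w]
      ring
    -- norms
    set N : ℝ := v ⬝ᵥ H⁻¹ *ᵥ v with hNdef
    have hN0 : 0 ≤ N := by simpa using hHinvs.dotProduct_mulVec_nonneg v
    set sq : ℝ := Real.sqrt q with hsqdef
    have hsq0 : 0 < sq := Real.sqrt_pos.mpr hq
    have hsq2 : sq ^ 2 = q := Real.sq_sqrt hq.le
    set c : ℝ := (80 / 79) * ε with hcdef
    have hc0 : 0 < c := by positivity
    -- Cauchy–Schwarz consequences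
    have hvy2 : (v ⬝ᵥ y) ^ 2 ≤ N * q := by
      have h1 := cs hHinvs v w
      rw [hinvw, hwy] at h1
      exact h1
    have hS2 : ∀ x : Fin d → ℝ, (v ⬝ᵥ x) ^ 2 ≤ N * (x ⬝ᵥ H *ᵥ x) := by
      intro x
      have h1 := cs hHinvs v (H *ᵥ x)
      have h2 : H⁻¹ *ᵥ (H *ᵥ x) = x := by
        rw [mulVec_mulVec, Matrix.nonsing_inv_mul _ hdet, one_mulVec]
      rw [h2, dotProduct_comm (H *ᵥ x) x] at h1
      exact h1
    have hA2 : ∀ x : Fin d → ℝ, (w ⬝ᵥ x) ^ 2 ≤ q * (x ⬝ᵥ H *ᵥ x) := by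
      intro x
      have h1 := cs hHs y x
      have h2 : y ⬝ᵥ H *ᵥ x = w ⬝ᵥ x := by
        rw [symm_dot hHt y x, ← hw, dotProduct_comm]
      rw [h2] at h1
      exact h1
    -- bound on N
    have hbw : b = w - v := by
      funext i; have := congrFun hHy i; simp at this ⊢; linarith
    have hbnorm : b ⬝ᵥ H⁻¹ *ᵥ b = q - 2 * (v ⬝ᵥ y) + N := by
      rw [hbw]
      simp only [sub_dotProduct, dotProduct_sub, mulVec_sub]
      have h1 : w ⬝ᵥ H⁻¹ *ᵥ w = q := by rw [hinvw, hwy]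
      have h2 : v ⬝ᵥ H⁻¹ *ᵥ w = v ⬝ᵥ y := by rw [hinvw]
      have h3 : w ⬝ᵥ H⁻¹ *ᵥ v = v ⬝ᵥ y := by rw [symm_dot hHinvt w v, hinvw]
      rw [h1, h2, h3, ← hNdef]
      ring
    have hvy_abs : -(Real.sqrt N * sq) ≤ v ⬝ᵥ y := by
      have h : (v ⬝ᵥ y) ^ 2 ≤ (Real.sqrt N * sq) ^ 2 := by
        rw [mul_pow, Real.sq_sqrt hN0, hsq2]; exact hvy2
      exact (abs_le_of_sq (by positivity) h).1
    have hnb_le : mnorm H⁻¹ b ≤ sq + Real.sqrt N := by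
      have h1 : b ⬝ᵥ H⁻¹ *ᵥ b ≤ (sq + Real.sqrt N) ^ 2 := by
        rw [hbnorm]
        have h2 : Real.sqrt N ^ 2 = N := Real.sq_sqrt hN0
        nlinarith [hvy_abs]
      calc mnorm H⁻¹ b = Real.sqrt (b ⬝ᵥ H⁻¹ *ᵥ b) := rfl
        _ ≤ Real.sqrt ((sq + Real.sqrt N) ^ 2) := Real.sqrt_le_sqrt h1
        _ = sq + Real.sqrt N := by rw [Real.sqrt_sq (by positivity)]
    have hNbound : Real.sqrt N ≤ c * sq := by
      have h1 : Real.sqrt N ≤ ε * (sq + Real.sqrt N) := by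
        calc Real.sqrt N = mnorm H⁻¹ v := rfl
          _ ≤ ε * mnorm H⁻¹ b := hv
          _ ≤ ε * (sq + Real.sqrt N) := mul_le_mul_of_nonneg_left hnb_le hε.le
      rw [hcdef]
      nlinarith [Real.sqrt_nonneg N, hsq0,
        mul_nonneg (by linarith : (0:ℝ) ≤ 1/80 - ε) (Real.sqrt_nonneg N)]
    have hNq : N ≤ c ^ 2 * q := by
      have h1 := mul_self_le_mul_self (Real.sqrt_nonneg N) hNbound
      have h2 : Real.sqrt N * Real.sqrt N = N := Real.mul_self_sqrt hN0
      have h3 : (c * sq) * (c * sq) = c ^ 2 * q := by rw [← hsq2]; ring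
      linarith
    -- |v ⬝ᵥ y| ≤ c q
    have hP : -(c * q) ≤ v ⬝ᵥ y ∧ v ⬝ᵥ y ≤ c * q := by
      apply abs_le_of_sq (mul_nonneg hc0.le hq.le)
      calc (v ⬝ᵥ y) ^ 2 ≤ N * q := hvy2
        _ ≤ c ^ 2 * q * q := mul_le_mul_of_nonneg_right hNq hq.le
        _ = (c * q) ^ 2 := by ring
    -- main pointwise bounds
    clear_value Δ c sq N q w
    have hmain : ∀ x : Fin d → ℝ,
        -(3 * c) * (x ⬝ᵥ H *ᵥ x) ≤ x ⬝ᵥ Δ *ᵥ x ∧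
        x ⬝ᵥ Δ *ᵥ x ≤ 3 * c * (x ⬝ᵥ H *ᵥ x) := by
      intro x
      have hX0 : 0 ≤ x ⬝ᵥ H *ᵥ x := by simpa using hHs.dotProduct_mulVec_nonneg x
      have hexp : q * q * (x ⬝ᵥ Δ *ᵥ x)
          = -(q * (2 * ((v ⬝ᵥ x) * (w ⬝ᵥ x)))) + (v ⬝ᵥ y) * ((w ⬝ᵥ x) * (w ⬝ᵥ x)) := by
        rw [hquad x]
        field_simp
      have hP2 : (v ⬝ᵥ y) ^ 2 ≤ N * q := hvy2
      exact scalar_main c q (x ⬝ᵥ H *ᵥ x) (v ⬝ᵥ x) (w ⬝ᵥ x) (v ⬝ᵥ y) (x ⬝ᵥ Δ *ᵥ x)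
        hc0 hq hX0 hNq (hS2 x) (hA2 x) hP2 hexp
    have hc_small : 3 * c ≤ 16 * ε := by rw [hcdef]; nlinarith
    -- PSD facts
    have psd1 : ((H + Δ) - (1 + 20 * ε)⁻¹ • H).PosSemidef := by
      apply posSemidef_of
      · simp only [transpose_sub, transpose_add, transpose_smul, hHt, hΔt]
      · intro x
        have h0 : 0 ≤ x ⬝ᵥ H *ᵥ x := by simpa using hHs.dotProduct_mulVec_nonneg x
        have h1 := (hmain x).1
        simp only [sub_mulVec, add_mulVec, smul_mulVec, dotProduct_sub, dotProduct_add,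
          dotProduct_smul, smul_eq_mul]
        have h2 := mul_le_mul_of_nonneg_right hκ1 h0
        have h3 := mul_le_mul_of_nonneg_right hc_small h0
        nlinarith
    have psd2 : ((1 + 20 * ε) • H - (H + Δ)).PosSemidef := by
      apply posSemidef_of
      · simp only [transpose_sub, transpose_add, transpose_smul, hHt, hΔt]
      · intro x
        have h0 : 0 ≤ x ⬝ᵥ H *ᵥ x := by simpa using hHs.dotProduct_mulVec_nonneg x
        have h1 := (hmain x).2
        simp only [sub_mulVec, add_mulVec, smul_mulVec, dotProduct_sub, dotProduct_add,
          dotProduct_smul, smul_eq_mul]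
        have h3 := mul_le_mul_of_nonneg_right hc_small h0
        have h4 : 0 ≤ ε * (x ⬝ᵥ H *ᵥ x) := mul_nonneg hε.le h0
        nlinarith
    -- (H + Δ) is positive definite, hence invertible
    have hPD : (H + Δ).PosDef := by
      refine PosDef.of_dotProduct_mulVec_pos ?_ fun x hx => ?_
      · rw [Matrix.IsHermitian, conjTranspose]
        have h : (H + Δ)ᵀ = H + Δ := by rw [transpose_add, hHt, hΔt]
        simpa [Matrix.map, Matrix.transpose] using h
      · have h1 : 0 ≤ x ⬝ᵥ ((H + Δ) - (1 + 20 * ε)⁻¹ • H) *ᵥ x := by simpa using psd1.dotProduct_mulVec_nonneg x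
        have h2 : 0 < x ⬝ᵥ H *ᵥ x := by simpa using hH.dotProduct_mulVec_pos hx
        simp only [sub_mulVec, smul_mulVec, dotProduct_sub, dotProduct_smul,
          smul_eq_mul] at h1
        simp only [star_trivial]
        nlinarith
    have hdet2 : IsUnit (H + Δ).det := hPD.det_pos.ne'.isUnit
    refine ⟨Δ, hΔt, ?_, psd1, psd2⟩
    rw [← hHΔy, mulVec_mulVec, Matrix.nonsing_inv_mul _ hdet2, one_mulVec]
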